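/- Let d ≥ 4 and let f₂ = x₀^{d-1}x₁ + x₂^d ∈ ℂ[x₀,x₁,x₂]. A homogeneous polynomial g of degree 2 in ℂ[y₀,y₁,y₂] annihilates f₂ (i.e. g(∂₀,∂₁,∂₂)f₂ = 0) if and only if g lies in the ℂ-linear span of the three quadrics y₀y₂, y₁², y₁y₂. -/

import Mathlib

open MvPolynomial

/-- The differential action of `g ∈ ℂ[y₀,…,y_{n-1}]` on `f ∈ ℂ[x₀,…,x_{n-1}]`:
`g(∂₀,…,∂_{n-1}) f`, obtained by substituting the partial derivative `∂/∂xᵢ` for `yᵢ`. -/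
noncomputable def diffOp {n : ℕ} (g f : MvPolynomial (Fin n) ℂ) : MvPolynomial (Fin n) ℂ :=
  g.support.sum fun m =>
    g.coeff m •
      ((List.ofFn fun i : Fin n =>
        ((MvPolynomial.pderiv i).toLinearMap ^ (m i) :
          Module.End ℂ (MvPolynomial (Fin n) ℂ))).prod f)

noncomputable def D0 {n : ℕ} (m : Fin n →₀ ℕ) : Module.End ℂ (MvPolynomial (Fin n) ℂ) :=
  (List.ofFn fun i : Fin n =>
        ((MvPolynomial.pderiv i).toLinearMap ^ (m i) :
          Module.End ℂ (MvPolynomial (Fin n) ℂ))).prod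

lemma diffOp_eq {n : ℕ} (g f : MvPolynomial (Fin n) ℂ) :
    diffOp g f = Finsupp.sum (AddMonoidAlgebra.coeff g) (fun m c => c • D0 m f) := by
  rw [sum_def]; rfl

lemma diffOp_add {n : ℕ} (g₁ g₂ f : MvPolynomial (Fin n) ℂ) :
    diffOp (g₁ + g₂) f = diffOp g₁ f + diffOp g₂ f := by
  simp only [diffOp_eq, AddMonoidAlgebra.coeff_add]
  exact Finsupp.sum_add_index (by simp) (by intros; rw [add_smul])

lemma diffOp_monomial {n : ℕ} (m : Fin n →₀ ℕ) (c : ℂ) (f : MvPolynomial (Fin n) ℂ) :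
    diffOp (monomial m c) f = c • D0 m f := by
  rw [diffOp_eq]
  exact sum_monomial_eq (by simp)

lemma fs3_ext {m m' : Fin 3 →₀ ℕ} (h0 : m 0 = m' 0) (h1 : m 1 = m' 1) (h2 : m 2 = m' 2) :
    m = m' := by
  ext i; fin_cases i <;> assumption

lemma fs3_eq_iff (m m' : Fin 3 →₀ ℕ) : m = m' ↔ m 0 = m' 0 ∧ m 1 = m' 1 ∧ m 2 = m' 2 :=
  ⟨fun h => by subst h; exact ⟨rfl, rfl, rfl⟩, fun ⟨a,b,c⟩ => fs3_ext a b c⟩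

lemma fs3_decomp (m : Fin 3 →₀ ℕ) :
    m = Finsupp.single 0 (m 0) + Finsupp.single 1 (m 1) + Finsupp.single 2 (m 2) := by
  apply fs3_ext <;> simp

lemma fs3_degree (m : Fin 3 →₀ ℕ) : m.degree = m 0 + m 1 + m 2 := by
  rw [Finsupp.degree_eq_weight_one, Finsupp.weight_apply, Finsupp.sum_fintype]
  · simp [Fin.sum_univ_three]
  · simp

-- abbreviations for the six degree-2 exponent vectors
notation "s200" => (Finsupp.single (0 : Fin 3) 2 : Fin 3 →₀ ℕ)
notation "s110" => (Finsupp.single (0 : Fin 3) 1 + Finsupp.single 1 1 : Fin 3 →₀ ℕ)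
notation "s101" => (Finsupp.single (0 : Fin 3) 1 + Finsupp.single 2 1 : Fin 3 →₀ ℕ)
notation "s020" => (Finsupp.single (1 : Fin 3) 2 : Fin 3 →₀ ℕ)
notation "s011" => (Finsupp.single (1 : Fin 3) 1 + Finsupp.single 2 1 : Fin 3 →₀ ℕ)
notation "s002" => (Finsupp.single (2 : Fin 3) 2 : Fin 3 →₀ ℕ)

lemma decomp (g : MvPolynomial (Fin 3) ℂ) (hg : g.IsHomogeneous 2) :
    g = monomial s200 (coeff s200 g) + monomial s110 (coeff s110 g)
      + monomial s101 (coeff s101 g) + monomial s020 (coeff s020 g)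
      + monomial s011 (coeff s011 g) + monomial s002 (coeff s002 g) := by
  have H : ∀ m : Fin 3 →₀ ℕ, m 0 + m 1 + m 2 ≠ 2 → coeff m g = 0 := fun m hm =>
    hg.coeff_eq_zero (by rw [fs3_degree]; omega)
  ext m
  simp only [coeff_add, coeff_monomial]
  by_cases h2 : m 0 + m 1 + m 2 = 2
  · have hm := fs3_decomp m
    obtain ⟨a, ha⟩ : ∃ a, m 0 = a := ⟨_, rfl⟩
    obtain ⟨b, hb⟩ : ∃ b, m 1 = b := ⟨_, rfl⟩
    obtain ⟨c, hc⟩ : ∃ c, m 2 = c := ⟨_, rfl⟩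
    rw [ha, hb, hc] at hm h2
    rw [hm]
    have ha2 : a ≤ 2 := by omega
    have hb2 : b ≤ 2 := by omega
    have hc2 : c ≤ 2 := by omega
    interval_cases a <;> interval_cases b <;> interval_cases c <;>
      first
        | omega
        | simp [fs3_eq_iff, Finsupp.single_apply]
  · rw [H m h2]
    have hne : ∀ s : Fin 3 →₀ ℕ, s 0 + s 1 + s 2 = 2 → ¬ (s = m) := by
      rintro s hs rfl; omega
    rw [if_neg (hne _ (by simp)), if_neg (hne _ (by simp)), if_neg (hne _ (by simp)),
      if_neg (hne _ (by simp)), if_neg (hne _ (by simp)), if_neg (hne _ (by simp))]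
    simp
lemma D200_eq (f : MvPolynomial (Fin 3) ℂ) :
    D0 (Finsupp.single (0:Fin 3) 2) f = pderiv 0 (pderiv 0 f) := by
  simp [D0, List.ofFn_succ, Module.End.mul_apply, pow_succ]
lemma D110_eq (f : MvPolynomial (Fin 3) ℂ) :
    D0 (Finsupp.single (0:Fin 3) 1 + Finsupp.single 1 1) f = pderiv 0 (pderiv 1 f) := by
  simp [D0, List.ofFn_succ, Module.End.mul_apply, pow_succ]
lemma D101_eq (f : MvPolynomial (Fin 3) ℂ) :
    D0 (Finsupp.single (0:Fin 3) 1 + Finsupp.single 2 1) f = pderiv 0 (pderiv 2 f) := by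
  simp [D0, List.ofFn_succ, Module.End.mul_apply, pow_succ]
lemma D020_eq (f : MvPolynomial (Fin 3) ℂ) :
    D0 (Finsupp.single (1:Fin 3) 2) f = pderiv 1 (pderiv 1 f) := by
  simp [D0, List.ofFn_succ, Module.End.mul_apply, pow_succ]
lemma D011_eq (f : MvPolynomial (Fin 3) ℂ) :
    D0 (Finsupp.single (1:Fin 3) 1 + Finsupp.single 2 1) f = pderiv 1 (pderiv 2 f) := by
  simp [D0, List.ofFn_succ, Module.End.mul_apply, pow_succ]
lemma D002_eq (f : MvPolynomial (Fin 3) ℂ) :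
    D0 (Finsupp.single (2:Fin 3) 2) f = pderiv 2 (pderiv 2 f) := by
  simp [D0, List.ofFn_succ, Module.End.mul_apply, pow_succ]

theorem stmt_0 (d : ℕ) (hd : 4 ≤ d)
    (f₂ : MvPolynomial (Fin 3) ℂ) (hf₂ : f₂ = X 0 ^ (d - 1) * X 1 + X 2 ^ d)
    (g : MvPolynomial (Fin 3) ℂ) (hg : g.IsHomogeneous 2) :
    diffOp g f₂ = 0 ↔
      g ∈ Submodule.span ℂ
        ({X 0 * X 2, X 1 ^ 2, X 1 * X 2} : Set (MvPolynomial (Fin 3) ℂ)) := by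
  obtain ⟨e, rfl⟩ : ∃ e, d = e + 4 := ⟨d - 4, by omega⟩
  have hd1 : e + 4 - 1 = e + 3 := rfl
  rw [hd1] at hf₂
  subst hf₂
  -- step derivatives
  have hP0 : pderiv (R := ℂ) 0 (X 0 ^ (e+3) * X 1 + X 2 ^ (e+4) : MvPolynomial (Fin 3) ℂ)
      = C ((e:ℂ)+3) * (X 0 ^ (e+2) * X 1) := by
    simp [pderiv_mul, pderiv_pow]; push_cast [map_ofNat]; ring
  have hP1 : pderiv (R := ℂ) 1 (X 0 ^ (e+3) * X 1 + X 2 ^ (e+4) : MvPolynomial (Fin 3) ℂ)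
      = X 0 ^ (e+3) := by
    simp [pderiv_mul, pderiv_pow]
  have hP2 : pderiv (R := ℂ) 2 (X 0 ^ (e+3) * X 1 + X 2 ^ (e+4) : MvPolynomial (Fin 3) ℂ)
      = C ((e:ℂ)+4) * X 2 ^ (e+3) := by
    simp [pderiv_mul, pderiv_pow]; push_cast [map_ofNat]; ring
  have hP00 : pderiv (R := ℂ) 0 (C ((e:ℂ)+3) * (X 0 ^ (e+2) * X 1) : MvPolynomial (Fin 3) ℂ)
      = C (((e:ℂ)+3)*((e:ℂ)+2)) * (X 0 ^ (e+1) * X 1) := by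
    simp [pderiv_C_mul, pderiv_mul, pderiv_pow]; push_cast [map_ofNat]; ring
  have hP01 : pderiv (R := ℂ) 0 (X 0 ^ (e+3) : MvPolynomial (Fin 3) ℂ)
      = C ((e:ℂ)+3) * X 0 ^ (e+2) := by
    simp [pderiv_pow]; push_cast [map_ofNat]; ring
  have hP02 : pderiv (R := ℂ) 0 (C ((e:ℂ)+4) * X 2 ^ (e+3) : MvPolynomial (Fin 3) ℂ) = 0 := by
    simp [pderiv_C_mul, pderiv_pow]
  have hP11 : pderiv (R := ℂ) 1 (X 0 ^ (e+3) : MvPolynomial (Fin 3) ℂ) = 0 := by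
    simp [pderiv_pow]
  have hP12 : pderiv (R := ℂ) 1 (C ((e:ℂ)+4) * X 2 ^ (e+3) : MvPolynomial (Fin 3) ℂ) = 0 := by
    simp [pderiv_C_mul, pderiv_pow]
  have hP22 : pderiv (R := ℂ) 2 (C ((e:ℂ)+4) * X 2 ^ (e+3) : MvPolynomial (Fin 3) ℂ)
      = C (((e:ℂ)+4)*((e:ℂ)+3)) * X 2 ^ (e+2) := by
    simp [pderiv_C_mul, pderiv_pow]; push_cast [map_ofNat]; ring
  -- monomial conversions
  have hX0 : (X 0 : MvPolynomial (Fin 3) ℂ) = monomial (Finsupp.single 0 1) 1 := rfl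
  have hX1 : (X 1 : MvPolynomial (Fin 3) ℂ) = monomial (Finsupp.single 1 1) 1 := rfl
  have hX2 : (X 2 : MvPolynomial (Fin 3) ℂ) = monomial (Finsupp.single 2 1) 1 := rfl
  have mA : C (((e:ℂ)+3)*((e:ℂ)+2)) * (X 0 ^ (e+1) * X 1 : MvPolynomial (Fin 3) ℂ)
      = monomial (Finsupp.single 0 (e+1) + Finsupp.single 1 1) (((e:ℂ)+3)*((e:ℂ)+2)) := by
    rw [hX1, X_pow_eq_monomial, monomial_mul, C_mul_monomial]; congr 1; ring
  have mB : C ((e:ℂ)+3) * (X 0 ^ (e+2) : MvPolynomial (Fin 3) ℂ)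
      = monomial (Finsupp.single 0 (e+2)) ((e:ℂ)+3) := by
    rw [X_pow_eq_monomial, C_mul_monomial, mul_one]
  have mC : C (((e:ℂ)+4)*((e:ℂ)+3)) * (X 2 ^ (e+2) : MvPolynomial (Fin 3) ℂ)
      = monomial (Finsupp.single 2 (e+2)) (((e:ℂ)+4)*((e:ℂ)+3)) := by
    rw [X_pow_eq_monomial, C_mul_monomial, mul_one]
  have hXA : (X 0 * X 2 : MvPolynomial (Fin 3) ℂ) = monomial s101 1 := by
    rw [hX0, hX2, monomial_mul, mul_one]
  have hXB : (X 1 ^ 2 : MvPolynomial (Fin 3) ℂ) = monomial s020 1 := by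
    rw [X_pow_eq_monomial]
  have hXC : (X 1 * X 2 : MvPolynomial (Fin 3) ℂ) = monomial s011 1 := by
    rw [hX1, hX2, monomial_mul, mul_one]
  -- the main computation
  have hDg : diffOp g (X 0 ^ (e+3) * X 1 + X 2 ^ (e+4) : MvPolynomial (Fin 3) ℂ)
      = coeff s200 g • monomial (Finsupp.single 0 (e+1) + Finsupp.single 1 1) (((e:ℂ)+3)*((e:ℂ)+2))
        + coeff s110 g • monomial (Finsupp.single 0 (e+2)) ((e:ℂ)+3)
        + coeff s002 g • monomial (Finsupp.single 2 (e+2)) (((e:ℂ)+4)*((e:ℂ)+3)) := by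
    conv_lhs => rw [decomp g hg]
    rw [diffOp_add, diffOp_add, diffOp_add, diffOp_add, diffOp_add,
      diffOp_monomial, diffOp_monomial, diffOp_monomial, diffOp_monomial,
      diffOp_monomial, diffOp_monomial,
      D200_eq, D110_eq, D101_eq, D020_eq, D011_eq, D002_eq,
      hP0, hP1, hP2, hP00, hP01, hP02, hP11, hP12, hP22, mA, mB, mC]
    simp only [map_zero, smul_zero, add_zero]
  -- nonvanishing of the numeric factors
  have hne2 : ((e:ℂ)+2) ≠ 0 := by
    have : ((e+2:ℕ):ℂ) ≠ 0 := Nat.cast_ne_zero.mpr (by omega)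
    push_cast at this; exact this
  have hne3 : ((e:ℂ)+3) ≠ 0 := by
    have : ((e+3:ℕ):ℂ) ≠ 0 := Nat.cast_ne_zero.mpr (by omega)
    push_cast at this; exact this
  have hne4 : ((e:ℂ)+4) ≠ 0 := by
    have : ((e+4:ℕ):ℂ) ≠ 0 := Nat.cast_ne_zero.mpr (by omega)
    push_cast at this; exact this
  constructor
  · intro h
    rw [hDg] at h
    -- disequalities of the exponent vectors
    have ne1 : (Finsupp.single (0:Fin 3) (e+2) : Fin 3 →₀ ℕ)
        ≠ Finsupp.single 0 (e+1) + Finsupp.single 1 1 := by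
      simp [fs3_eq_iff, Finsupp.single_apply]
    have ne2' : (Finsupp.single (2:Fin 3) (e+2) : Fin 3 →₀ ℕ)
        ≠ Finsupp.single 0 (e+1) + Finsupp.single 1 1 := by
      simp [fs3_eq_iff, Finsupp.single_apply]
    have ne3' : (Finsupp.single (0:Fin 3) (e+1) + Finsupp.single 1 1 : Fin 3 →₀ ℕ)
        ≠ Finsupp.single 0 (e+2) := by
      simp [fs3_eq_iff, Finsupp.single_apply]
    have ne4' : (Finsupp.single (2:Fin 3) (e+2) : Fin 3 →₀ ℕ) ≠ Finsupp.single 0 (e+2) := by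
      simp [fs3_eq_iff, Finsupp.single_apply]
    have ne5' : (Finsupp.single (0:Fin 3) (e+1) + Finsupp.single 1 1 : Fin 3 →₀ ℕ)
        ≠ Finsupp.single 2 (e+2) := by
      simp [fs3_eq_iff, Finsupp.single_apply]
    have ne6' : (Finsupp.single (0:Fin 3) (e+2) : Fin 3 →₀ ℕ) ≠ Finsupp.single 2 (e+2) := by
      simp [fs3_eq_iff, Finsupp.single_apply]
    have h1 := congrArg (coeff (Finsupp.single (0:Fin 3) (e+1) + Finsupp.single 1 1)) h
    have h2 := congrArg (coeff (Finsupp.single (0:Fin 3) (e+2))) h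
    have h3 := congrArg (coeff (Finsupp.single (2:Fin 3) (e+2))) h
    simp only [coeff_add, coeff_smul, coeff_monomial, coeff_zero, if_pos rfl,
      if_neg ne1, if_neg ne2', if_neg ne3', if_neg ne4', if_neg ne5', if_neg ne6',
      smul_eq_mul, mul_zero, add_zero, zero_add, mul_ite, mul_one] at h1 h2 h3
    have hc200 : coeff s200 g = 0 := by
      rcases mul_eq_zero.mp h1 with h' | h'
      · exact h'
      · exact absurd h' (mul_ne_zero hne3 hne2)
    have hc110 : coeff s110 g = 0 := by
      rcases mul_eq_zero.mp h2 with h' | h'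
      · exact h'
      · exact absurd h' hne3
    have hc002 : coeff s002 g = 0 := by
      rcases mul_eq_zero.mp h3 with h' | h'
      · exact h'
      · exact absurd h' (mul_ne_zero hne4 hne3)
    rw [decomp g hg, hc200, hc110, hc002]
    simp only [map_zero, zero_add, add_zero]
    have m1 : monomial s101 (coeff s101 g) = coeff s101 g • (X 0 * X 2 : MvPolynomial (Fin 3) ℂ) := by
      rw [hXA, smul_monomial, smul_eq_mul, mul_one]
    have m2 : monomial s020 (coeff s020 g) = coeff s020 g • (X 1 ^ 2 : MvPolynomial (Fin 3) ℂ) := by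
      rw [hXB, smul_monomial, smul_eq_mul, mul_one]
    have m3 : monomial s011 (coeff s011 g) = coeff s011 g • (X 1 * X 2 : MvPolynomial (Fin 3) ℂ) := by
      rw [hXC, smul_monomial, smul_eq_mul, mul_one]
    rw [m1, m2, m3]
    refine Submodule.add_mem _ (Submodule.add_mem _ ?_ ?_) ?_ <;>
      exact Submodule.smul_mem _ _ (Submodule.subset_span (by simp))
  · intro h
    have hle : Submodule.span ℂ ({X 0 * X 2, X 1 ^ 2, X 1 * X 2} : Set (MvPolynomial (Fin 3) ℂ))
        ≤ LinearMap.ker (lcoeff ℂ s200) ⊓ LinearMap.ker (lcoeff ℂ s110)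
          ⊓ LinearMap.ker (lcoeff ℂ s002) := by
      rw [Submodule.span_le]
      rintro p hp
      simp only [Set.mem_insert_iff, Set.mem_singleton_iff] at hp
      rcases hp with rfl | rfl | rfl <;>
        · simp only [SetLike.mem_coe, Submodule.mem_inf, LinearMap.mem_ker, lcoeff_apply,
            hXA, hXB, hXC, coeff_monomial]
          refine ⟨⟨?_, ?_⟩, ?_⟩ <;>
            · rw [if_neg]
              simp [fs3_eq_iff, Finsupp.single_apply]
    obtain ⟨⟨hc200, hc110⟩, hc002⟩ := by
      simpa only [Submodule.mem_inf, LinearMap.mem_ker, lcoeff_apply] using hle h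
    rw [hDg, hc200, hc110, hc002]
    simp
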